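/- Port-Hamiltonian implies KYP: if the LTV system is port-Hamiltonian with data Q, J, R, K, G, P, S, N, then Q satisfies the Kalman–Yakubovich–Popov inequality, i.e. the Hermitian block matrix [[−A(t)*Q(t) − Q(t)A(t) − Q̇(t), C(t)* − Q(t)B(t)],[C(t) − B(t)*Q(t), D(t) + D(t)*]] is positive semidefinite for a.e. t ∈ 𝕋. -/

import Mathlib

open MeasureTheory Matrix Set
open scoped ENNReal ComplexOrder

noncomputable section

attribute [local instance] Matrix.normedAddCommGroup Matrix.normedSpace

variable {n m : ℕ}

/-- `f` is locally `Lᵖ` on the interval `T`: it is `ℒᵖ` on every compact subinterval. -/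
def LocLp {E : Type*} [NormedAddCommGroup E] (T : Set ℝ) (p : ℝ≥0∞) (f : ℝ → E) : Prop :=
  ∀ a ∈ T, ∀ b ∈ T, MemLp f p (volume.restrict (Icc a b))

/-- The coefficient regularity assumptions of an LTV system:
`A ∈ L¹_loc`, `B ∈ L²_loc`, `C ∈ L²_loc`, `D ∈ L^∞_loc`. -/
def IsLTV (T : Set ℝ) (A : ℝ → Matrix (Fin n) (Fin n) ℂ) (B : ℝ → Matrix (Fin n) (Fin m) ℂ)
    (C : ℝ → Matrix (Fin m) (Fin n) ℂ) (D : ℝ → Matrix (Fin m) (Fin m) ℂ) : Prop :=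
  LocLp T 1 A ∧ LocLp T 2 B ∧ LocLp T 2 C ∧ LocLp T ⊤ D

/-- Port-Hamiltonian structure for the LTV system `(A,B,C,D)` with Hamiltonian data
`Q` (which is `W^{1,1}_loc` with a.e. derivative `Q'`) and coefficients
`J, R, K, G, P, S, N`. -/
def IsPH (T : Set ℝ) (A : ℝ → Matrix (Fin n) (Fin n) ℂ) (B : ℝ → Matrix (Fin n) (Fin m) ℂ)
    (C : ℝ → Matrix (Fin m) (Fin n) ℂ) (D : ℝ → Matrix (Fin m) (Fin m) ℂ)
    (Q Q' J R K : ℝ → Matrix (Fin n) (Fin n) ℂ)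
    (G P : ℝ → Matrix (Fin n) (Fin m) ℂ) (S N : ℝ → Matrix (Fin m) (Fin m) ℂ) : Prop :=
  (∀ t ∈ T, (Q t).PosSemidef) ∧
  LocLp T 1 Q' ∧
  (∀ s ∈ T, ∀ t ∈ T, Q t - Q s = ∫ r in s..t, Q' r) ∧
  AEStronglyMeasurable J (volume.restrict T) ∧
  AEStronglyMeasurable R (volume.restrict T) ∧
  AEStronglyMeasurable K (volume.restrict T) ∧
  AEStronglyMeasurable G (volume.restrict T) ∧
  AEStronglyMeasurable P (volume.restrict T) ∧
  AEStronglyMeasurable S (volume.restrict T) ∧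
  AEStronglyMeasurable N (volume.restrict T) ∧
  (∀ᵐ t ∂(volume : Measure ℝ), t ∈ T →
    J t = -(J t)ᴴ ∧ N t = -(N t)ᴴ ∧
    Q t * K t + (K t)ᴴ * Q t = Q' t ∧
    (Matrix.fromBlocks (R t) (P t) ((P t)ᴴ) (S t)).PosSemidef ∧
    A t = (J t - R t) * Q t - K t ∧
    B t = G t - P t ∧
    C t = (G t + P t)ᴴ * Q t ∧
    D t = S t - N t)

/-- **Port-Hamiltonian implies KYP.** If the LTV system is port-Hamiltonian with data
`Q, J, R, K, G, P, S, N`, then `Q` satisfies the Kalman–Yakubovich–Popov inequality: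
`[[−AᴴQ − QA − Q̇, Cᴴ − QB],[C − BᴴQ, D + Dᴴ]] ⪰ 0` a.e. on `𝕋`. -/
theorem pH_implies_KYP
    (T : Set ℝ) (hTopen : IsOpen T) (hTconn : T.OrdConnected)
    (A : ℝ → Matrix (Fin n) (Fin n) ℂ) (B : ℝ → Matrix (Fin n) (Fin m) ℂ)
    (C : ℝ → Matrix (Fin m) (Fin n) ℂ) (D : ℝ → Matrix (Fin m) (Fin m) ℂ)
    (hLTV : IsLTV T A B C D)
    (Q Q' J R K : ℝ → Matrix (Fin n) (Fin n) ℂ)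
    (G P : ℝ → Matrix (Fin n) (Fin m) ℂ) (S N : ℝ → Matrix (Fin m) (Fin m) ℂ)
    (hPH : IsPH T A B C D Q Q' J R K G P S N) :
    ∀ᵐ t ∂(volume : Measure ℝ), t ∈ T →
      (Matrix.fromBlocks
        (-((A t)ᴴ * Q t) - Q t * A t - Q' t) ((C t)ᴴ - Q t * B t)
        (C t - (B t)ᴴ * Q t) (D t + (D t)ᴴ)).PosSemidef := by
  obtain ⟨hQpos, _, _, _, _, _, _, _, _, _, hae⟩ := hPH
  filter_upwards [hae] with t ht htT
  obtain ⟨hJ, hN, hQK, hW, hA, hB, hC, hD⟩ := ht htT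
  have hQH : (Q t)ᴴ = Q t := (hQpos t htT).isHermitian
  have hWH := hW.isHermitian
  rw [Matrix.isHermitian_fromBlocks_iff] at hWH
  obtain ⟨hR, -, hPB, hS⟩ := hWH
  have hJ' : (J t)ᴴ = -(J t) := (neg_eq_iff_eq_neg.mpr hJ).symm
  have hN' : (N t)ᴴ = -(N t) := (neg_eq_iff_eq_neg.mpr hN).symm
  set M : Matrix (Fin n ⊕ Fin m) (Fin n ⊕ Fin m) ℂ :=
    Matrix.fromBlocks (Q t) 0 0 (1 : Matrix (Fin m) (Fin m) ℂ) with hM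
  have e1 : -((A t)ᴴ * Q t) - Q t * A t - Q' t
      = Q t * R t * Q t + Q t * R t * Q t := by
    rw [hA, ← hQK]
    simp only [Matrix.conjTranspose_sub, Matrix.conjTranspose_mul, hQH, hJ', hR.eq]
    noncomm_ring
  have e2 : (C t)ᴴ - Q t * B t = Q t * P t + Q t * P t := by
    rw [hB, hC]
    simp only [Matrix.conjTranspose_mul, Matrix.conjTranspose_add, Matrix.conjTranspose_conjTranspose, hQH]
    rw [Matrix.mul_add, Matrix.mul_sub]; abel
  have e3 : C t - (B t)ᴴ * Q t = (P t)ᴴ * Q t + (P t)ᴴ * Q t := by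
    rw [hB, hC]
    simp only [Matrix.conjTranspose_sub, Matrix.conjTranspose_add]
    rw [Matrix.add_mul, Matrix.sub_mul]; abel
  have e4 : D t + (D t)ᴴ = S t + S t := by
    rw [hD]
    simp only [Matrix.conjTranspose_sub, hS.eq, hN']
    noncomm_ring
  have key : (Matrix.fromBlocks
        (-((A t)ᴴ * Q t) - Q t * A t - Q' t) ((C t)ᴴ - Q t * B t)
        (C t - (B t)ᴴ * Q t) (D t + (D t)ᴴ))
      = Mᴴ * (Matrix.fromBlocks (R t) (P t) ((P t)ᴴ) (S t)) * M
        + Mᴴ * (Matrix.fromBlocks (R t) (P t) ((P t)ᴴ) (S t)) * M := by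
    rw [e1, e2, e3, e4, hM]
    simp [Matrix.fromBlocks_conjTranspose, Matrix.fromBlocks_multiply,
      Matrix.fromBlocks_add, hQH]
  rw [key]
  exact (hW.conjTranspose_mul_mul_same M).add (hW.conjTranspose_mul_mul_same M)
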